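/- arXiv:1705.01327 — 5 statements merged into one kernel-verified Lean document; each statement's English description precedes it below -/
import Mathlib

section
/- Let n be a positive integer and p_1, ..., p_n be positive real numbers. Then the integral of the function x_1^{p_1-1} x_2^{p_2-1} \cdots x_n^{p_n-1} over the set B^+ = {(x_1,...,x_n) \in \mathbb{R}^n : x_1^2 + ... + x_n^2 \le 1, x_k > 0 for all k} with respect to Lebesgue measure equals (1/2^n) \cdot \Gamma(p_1/2)\cdots\Gamma(p_n/2) / \Gamma(1 + (p_1 + ... + p_n)/2). -/
open MeasureTheory Real

open Set Filter

lemma aux_gamma_int {q : ℝ} (hq : 0 < q) :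
    ∫ t in Ioi (0:ℝ), t ^ (q - 1) * exp (-t ^ 2) = Gamma (q / 2) / 2 := by
  have h := integral_rpow_mul_exp_neg_rpow (p := 2) (q := q - 1) two_pos (by linarith)
  rw [show q - 1 + 1 = q by ring] at h
  rw [show Gamma (q / 2) / 2 = 1 / 2 * Gamma (q / 2) by ring, ← h]
  refine setIntegral_congr_fun measurableSet_Ioi (fun x hx => ?_)
  rw [show ((2:ℝ)) = ((2:ℕ):ℝ) by norm_num, Real.rpow_natCast]

lemma aux_intOn (q : ℝ) (hq : -1 < q) :
    IntegrableOn (fun t : ℝ => t ^ q * exp (-t ^ 2)) (Ioi 0) := by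
  have := integrableOn_rpow_mul_exp_neg_mul_sq one_pos hq
  simpa using this

lemma aux_tail_int {a : ℝ} (ha : 0 ≤ a) :
    IntegrableOn (fun t : ℝ => 2 * t * exp (-t ^ 2)) (Ioi a) := by
  have h0 : IntegrableOn (fun t : ℝ => t ^ (1:ℝ) * exp (-t ^ 2)) (Ioi a) :=
    (aux_intOn 1 (by norm_num)).mono_set (Ioi_subset_Ioi ha)
  have h2 : IntegrableOn (fun t : ℝ => 2 * (t ^ (1:ℝ) * exp (-t ^ 2))) (Ioi a) :=
    h0.const_mul 2
  refine h2.congr_fun (fun x hx => ?_) measurableSet_Ioi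
  beta_reduce; rw [Real.rpow_one]; ring

lemma aux_tail {a : ℝ} (ha : 0 ≤ a) :
    ∫ t in Ioi a, 2 * t * exp (-t ^ 2) = exp (-a ^ 2) := by
  have hderiv : ∀ x ∈ Ici a, HasDerivAt (fun t : ℝ => -exp (-t ^ 2)) (2 * x * exp (-x ^ 2)) x := by
    intro x _
    have h1 : HasDerivAt (fun t : ℝ => -t ^ 2) (-(2 * x)) x := by
      simpa using ((hasDerivAt_pow 2 x).fun_neg)
    have := h1.exp
    exact this.fun_neg.congr_deriv (by ring)
  have htend : Tendsto (fun t : ℝ => -exp (-t ^ 2)) atTop (nhds 0) := by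
    rw [show (0:ℝ) = -0 by norm_num]
    refine (Real.tendsto_exp_atBot.comp ?_).neg
    exact tendsto_neg_atBot_iff.mpr (tendsto_pow_atTop two_ne_zero)
  have := integral_Ioi_of_hasDerivAt_of_tendsto' hderiv (aux_tail_int ha) htend
  rw [this]; ring

lemma aux_top {s : ℝ} (hs : 0 < s) :
    ∫ t in Ioi (0:ℝ), 2 * t * exp (-t ^ 2) * t ^ s = Gamma (1 + s / 2) := by
  have h : ∫ t in Ioi (0:ℝ), 2 * (t ^ (s + 1) * exp (-t ^ 2)) = 2 * (Gamma ((s + 2) / 2) / 2) := by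
    rw [integral_const_mul, show s + 1 = s + 2 - 1 by ring, aux_gamma_int (by linarith : (0:ℝ) < s + 2)]
  calc ∫ t in Ioi (0:ℝ), 2 * t * exp (-t ^ 2) * t ^ s
      = ∫ t in Ioi (0:ℝ), 2 * (t ^ (s + 1) * exp (-t ^ 2)) := by
        refine setIntegral_congr_fun measurableSet_Ioi (fun x hx => ?_)
        rw [Real.rpow_add hx, Real.rpow_one]; ring
    _ = Gamma (1 + s / 2) := by
        rw [h, show (s + 2) / 2 = 1 + s / 2 by ring]; ring

lemma aux_top_int {s : ℝ} (hs : 0 < s) :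
    IntegrableOn (fun t : ℝ => 2 * t * exp (-t ^ 2) * t ^ s) (Ioi 0) := by
  have h0 : IntegrableOn (fun t : ℝ => 2 * (t ^ (s + 1) * exp (-t ^ 2))) (Ioi 0) :=
    (aux_intOn (s + 1) (by linarith)).const_mul 2
  refine h0.congr_fun (fun x hx => ?_) measurableSet_Ioi
  beta_reduce; rw [Real.rpow_add hx, Real.rpow_one]; ring
section
variable (n : ℕ) (p : Fin n → ℝ)

lemma aux_measS (c : ℝ) :
    MeasurableSet {x : Fin n → ℝ | ∑ i, (x i) ^ 2 ≤ c ∧ ∀ i, 0 < x i} := by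
  rw [Set.setOf_and]
  refine MeasurableSet.inter (measurableSet_le ?_ measurable_const) ?_
  · exact Finset.measurable_sum _ fun i _ => (measurable_pi_apply i).pow_const 2
  · have : {x : Fin n → ℝ | ∀ i, 0 < x i} = Set.univ.pi fun _ => Ioi (0:ℝ) := by
      ext x; simp [Set.mem_pi]
    rw [this]
    exact MeasurableSet.univ_pi fun i => measurableSet_Ioi

lemma aux_measfE :
    Measurable fun x : Fin n → ℝ => ∏ i, ENNReal.ofReal ((x i) ^ (p i - 1)) := by
  measurability

end

lemma aux_scaling (n : ℕ) (p : Fin n → ℝ) (hp : ∀ i, 0 < p i) {t : ℝ} (ht : 0 < t) :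
    ∫⁻ x in {x : Fin n → ℝ | ∑ i, (x i) ^ 2 ≤ t ^ 2 ∧ ∀ i, 0 < x i},
        ∏ i, ENNReal.ofReal ((x i) ^ (p i - 1)) =
      ENNReal.ofReal (t ^ (∑ i, p i)) *
        ∫⁻ x in {x : Fin n → ℝ | ∑ i, (x i) ^ 2 ≤ 1 ∧ ∀ i, 0 < x i},
          ∏ i, ENNReal.ofReal ((x i) ^ (p i - 1)) := by
  set fE : (Fin n → ℝ) → ENNReal := fun x => ∏ i, ENNReal.ofReal ((x i) ^ (p i - 1)) with hfE
  set S : Set (Fin n → ℝ) := {x | ∑ i, (x i) ^ 2 ≤ 1 ∧ ∀ i, 0 < x i} with hSdef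
  set St : Set (Fin n → ℝ) := {x | ∑ i, (x i) ^ 2 ≤ t ^ 2 ∧ ∀ i, 0 < x i} with hStdef
  have hS : MeasurableSet S := aux_measS n 1
  have hSt : MeasurableSet St := aux_measS n (t ^ 2)
  have hfEm : Measurable fE := aux_measfE n p
  have htn : (0:ℝ) < t ^ n := pow_pos ht n
  -- scaling of the ambient lintegral
  have key : ∫⁻ x, St.indicator fE x =
      ENNReal.ofReal (t ^ n) * ∫⁻ y, St.indicator fE (t • y) := by
    have hmap := Measure.map_addHaar_smul (volume : Measure (Fin n → ℝ)) (ne_of_gt ht)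
    have h1 : ∫⁻ y, St.indicator fE (t • y) =
        ∫⁻ x, St.indicator fE x ∂(Measure.map (t • ·) volume) :=
      (lintegral_map (hfEm.indicator hSt) (measurable_const_smul t)).symm
    rw [h1, hmap, lintegral_smul_measure, smul_eq_mul, ← mul_assoc]
    have hEn : Module.finrank ℝ (Fin n → ℝ) = n := by simp
    rw [hEn, abs_inv, abs_of_pos htn, ← ENNReal.ofReal_mul htn.le,
      mul_inv_cancel₀ (ne_of_gt htn), ENNReal.ofReal_one, one_mul]
  -- membership rewriting
  have hmem : ∀ y : Fin n → ℝ, (t • y ∈ St) ↔ y ∈ S := by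
    intro y
    have h1 : ∑ i, (t * y i) ^ 2 = t ^ 2 * ∑ i, (y i) ^ 2 := by
      rw [Finset.mul_sum]; exact Finset.sum_congr rfl fun i _ => by ring
    have h2 : ∀ i, (0 < t * y i ↔ 0 < y i) := fun i =>
      ⟨fun h => by nlinarith, fun h => mul_pos ht h⟩
    simp only [hStdef, hSdef, Set.mem_setOf_eq, Pi.smul_apply, smul_eq_mul, h1]
    rw [mul_le_iff_le_one_right (by positivity)]
    exact and_congr Iff.rfl (forall_congr' h2)
  have hind : ∀ y, St.indicator fE (t • y) = S.indicator (fun y => fE (t • y)) y := by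
    intro y
    by_cases hy : y ∈ S
    · rw [Set.indicator_of_mem hy, Set.indicator_of_mem ((hmem y).mpr hy)]
    · rw [Set.indicator_of_notMem hy,
        Set.indicator_of_notMem (fun h => hy ((hmem y).mp h))]
  -- value of fE (t • y) on S
  have hval : ∀ y ∈ S, fE (t • y) = ENNReal.ofReal (t ^ (∑ i, p i - n)) * fE y := by
    intro y hy
    have hy' : ∀ i, 0 < y i := hy.2
    have : ∀ i, ENNReal.ofReal ((t * y i) ^ (p i - 1)) =
        ENNReal.ofReal (t ^ (p i - 1)) * ENNReal.ofReal ((y i) ^ (p i - 1)) := by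
      intro i
      rw [Real.mul_rpow ht.le (hy' i).le, ENNReal.ofReal_mul (Real.rpow_nonneg ht.le _)]
    simp only [hfE, Pi.smul_apply, smul_eq_mul]
    rw [Finset.prod_congr rfl fun i _ => this i, Finset.prod_mul_distrib,
      ← ENNReal.ofReal_prod_of_nonneg fun i _ => Real.rpow_nonneg ht.le _,
      ← Real.rpow_sum_of_pos ht]
    congr 2
    rw [Finset.sum_sub_distrib, Finset.sum_const, Finset.card_univ, Fintype.card_fin,
      nsmul_eq_mul, mul_one]
  calc ∫⁻ x in St, fE x = ∫⁻ x, St.indicator fE x := (lintegral_indicator hSt _).symm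
    _ = ENNReal.ofReal (t ^ n) * ∫⁻ y, St.indicator fE (t • y) := key
    _ = ENNReal.ofReal (t ^ n) * ∫⁻ y in S, fE (t • y) := by
        simp_rw [hind]
        rw [lintegral_indicator hS]
    _ = ENNReal.ofReal (t ^ n) *
        (ENNReal.ofReal (t ^ (∑ i, p i - n)) * ∫⁻ y in S, fE y) := by
        rw [setLIntegral_congr_fun_ae hS (Filter.Eventually.of_forall hval),
          lintegral_const_mul' _ _ ENNReal.ofReal_ne_top]
    _ = ENNReal.ofReal (t ^ (∑ i, p i)) * ∫⁻ x in S, fE x := by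
        rw [← mul_assoc, ← ENNReal.ofReal_mul (by positivity), ← Real.rpow_natCast t n,
          ← Real.rpow_add ht]
        norm_num

lemma aux_m_rpow (c : ℝ) : Measurable fun u : ℝ => u ^ c := by measurability

lemma aux_measf (n : ℕ) (p : Fin n → ℝ) :
    Measurable fun x : Fin n → ℝ => ∏ i, (x i) ^ (p i - 1) := by measurability

/-- Generalized Dirichlet formula: the integral of `x₁^(p₁-1) ⋯ xₙ^(pₙ-1)` over the
intersection `B⁺` of the closed Euclidean unit ball with the open positive orthant equals
`(1/2ⁿ) · Γ(p₁/2)⋯Γ(pₙ/2) / Γ(1 + (p₁+⋯+pₙ)/2)`. -/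
theorem stmt_0 (n : ℕ) (hn : 0 < n) (p : Fin n → ℝ) (hp : ∀ i, 0 < p i) :
    ∫ x in {x : Fin n → ℝ | ∑ i, (x i) ^ 2 ≤ 1 ∧ ∀ i, 0 < x i},
        ∏ i, (x i) ^ (p i - 1) =
      (1 / 2 ^ n) * (∏ i, Gamma (p i / 2)) / Gamma (1 + (∑ i, p i) / 2) := by
  have hne : Nonempty (Fin n) := ⟨⟨0, hn⟩⟩
  set s : ℝ := ∑ i, p i with hsdef
  have hspos : 0 < s := Finset.sum_pos (fun i _ => hp i) Finset.univ_nonempty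
  set fE : (Fin n → ℝ) → ENNReal := fun x => ∏ i, ENNReal.ofReal ((x i) ^ (p i - 1)) with hfEdef
  set S : Set (Fin n → ℝ) := {x | ∑ i, (x i) ^ 2 ≤ 1 ∧ ∀ i, 0 < x i} with hSdef
  set O : Set (Fin n → ℝ) := Set.univ.pi fun _ => Ioi (0:ℝ) with hOdef
  have hS : MeasurableSet S := aux_measS n 1
  have hO : MeasurableSet O := MeasurableSet.univ_pi fun i => measurableSet_Ioi
  have hfEm : Measurable fE := aux_measfE n p
  have hfE_ne_top : ∀ x, fE x ≠ ⊤ := by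
    intro x
    simp only [hfEdef]
    exact (ENNReal.prod_lt_top fun i _ => ENNReal.ofReal_lt_top).ne
  set I : ENNReal := ∫⁻ x in S, fE x with hIdef
  set G : Fin n → ℝ → ℝ :=
    fun i => (Ioi (0:ℝ)).indicator fun u => u ^ (p i - 1) * exp (-u ^ 2) with hGdef
  set g : (Fin n → ℝ) → ℝ := fun x => ∏ i, G i (x i) with hgdef
  set w : ℝ → ENNReal := fun u => ENNReal.ofReal (2 * u * exp (-u ^ 2)) with hwdef
  set ρ : (Fin n → ℝ) → ℝ := fun x => Real.sqrt (∑ i, (x i) ^ 2) with hρdef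
  have hρm : Measurable ρ :=
    Real.continuous_sqrt.measurable.comp
      (Finset.measurable_sum _ fun i _ => (measurable_pi_apply i).pow_const 2)
  have hwm : Measurable w :=
    ENNReal.measurable_ofReal.comp
      (((measurable_const.mul measurable_id).mul
        ((measurable_id.pow_const 2).neg.exp)))
  have hGi_int : ∀ i, Integrable (G i) := fun i =>
    (integrable_indicator_iff measurableSet_Ioi).mpr (aux_intOn (p i - 1) (by linarith [hp i]))
  have hGi_nonneg : ∀ i u, 0 ≤ G i u := by
    intro i u
    refine Set.indicator_nonneg (fun v hv => ?_) u
    have hv' : (0:ℝ) < v := hv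
    positivity
  have hg_int : Integrable g := Integrable.fintype_prod (𝕜 := ℝ) hGi_int
  have hg_nonneg : ∀ x, 0 ≤ g x := fun x =>
    Finset.prod_nonneg fun i _ => hGi_nonneg i _
  have hgval : ∫ x, g x = ∏ i, (Gamma (p i / 2) / 2) := by
    rw [hgdef, integral_fintype_prod_volume_eq_prod (f := fun i u => G i u)]
    refine Finset.prod_congr rfl fun i _ => ?_
    rw [hGdef]
    rw [integral_indicator measurableSet_Ioi]
    exact aux_gamma_int (hp i)
  set J : ENNReal := ∫⁻ x, ENNReal.ofReal (g x) with hJdef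
  have hJ1 : J = ENNReal.ofReal (∏ i, (Gamma (p i / 2) / 2)) := by
    rw [hJdef, ← ofReal_integral_eq_lintegral_ofReal hg_int (Eventually.of_forall hg_nonneg),
      hgval]
  -- pointwise: ofReal (g x) = indicator O (fE * exp weight)
  have hpoint : ∀ x, ENNReal.ofReal (g x) =
      O.indicator (fun x => fE x * ENNReal.ofReal (exp (-∑ i, (x i) ^ 2))) x := by
    intro x
    by_cases hx : x ∈ O
    · have hx' : ∀ i, 0 < x i := fun i => hx i (Set.mem_univ i)
      rw [Set.indicator_of_mem hx]
      have h1 : ∀ i, G i (x i) = (x i) ^ (p i - 1) * exp (-(x i) ^ 2) := fun i =>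
        Set.indicator_of_mem (hx' i) _
      calc ENNReal.ofReal (g x) = ∏ i, ENNReal.ofReal (G i (x i)) :=
            ENNReal.ofReal_prod_of_nonneg fun i _ => hGi_nonneg i _
        _ = ∏ i, (ENNReal.ofReal ((x i) ^ (p i - 1)) * ENNReal.ofReal (exp (-(x i) ^ 2))) := by
            refine Finset.prod_congr rfl fun i _ => ?_
            rw [h1 i, ENNReal.ofReal_mul (Real.rpow_nonneg (hx' i).le _)]
        _ = fE x * ∏ i, ENNReal.ofReal (exp (-(x i) ^ 2)) := Finset.prod_mul_distrib
        _ = fE x * ENNReal.ofReal (exp (-∑ i, (x i) ^ 2)) := by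
            rw [← ENNReal.ofReal_prod_of_nonneg fun i _ => (exp_pos _).le, ← Real.exp_sum]
            congr 2
            rw [← Finset.sum_neg_distrib]
    · rw [Set.indicator_of_notMem hx]
      have : ∃ i, ¬ (0 < x i) := by
        by_contra hcon
        push_neg at hcon
        exact hx fun i _ => hcon i
      obtain ⟨i, hi⟩ := this
      have : G i (x i) = 0 := Set.indicator_of_notMem hi _
      rw [hgdef]
      simp only
      rw [Finset.prod_eq_zero (Finset.mem_univ i) this, ENNReal.ofReal_zero]
  have hJ2 : J = ∫⁻ x in O, fE x * ENNReal.ofReal (exp (-∑ i, (x i) ^ 2)) := by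
    rw [hJdef]
    simp_rw [hpoint]
    rw [lintegral_indicator hO]
  -- layer-cake for the exponential weight
  have hC2 : ∀ x ∈ O, ENNReal.ofReal (exp (-∑ i, (x i) ^ 2)) =
      ∫⁻ u in Ioi (0:ℝ), (Ici (ρ x)).indicator w u := by
    intro x hx
    have hx' : ∀ i, 0 < x i := fun i => hx i (Set.mem_univ i)
    have hsum_pos : 0 < ∑ i, (x i) ^ 2 :=
      Finset.sum_pos (fun i _ => pow_pos (hx' i) 2) Finset.univ_nonempty
    have ha : 0 < ρ x := Real.sqrt_pos.mpr hsum_pos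
    have hsub : Ici (ρ x) ∩ Ioi (0:ℝ) = Ici (ρ x) := by
      refine Set.inter_eq_left.mpr fun u hu => lt_of_lt_of_le ha hu
    rw [lintegral_indicator measurableSet_Ici, Measure.restrict_restrict measurableSet_Ici,
      hsub, ← Measure.restrict_congr_set Ioi_ae_eq_Ici,
      ← ofReal_integral_eq_lintegral_ofReal (aux_tail_int ha.le) ?_, aux_tail ha.le,
      Real.sq_sqrt hsum_pos.le]
    · filter_upwards [self_mem_ae_restrict measurableSet_Ioi] with u hu
      have h0u : (0:ℝ) < u := lt_trans ha hu
      simp only [Pi.zero_apply]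
      nlinarith [Real.exp_pos (-u ^ 2)]
  -- double integral and swap
  have hJ3 : J = ∫⁻ u in Ioi (0:ℝ), ∫⁻ x in O, fE x * (Ici (ρ x)).indicator w u := by
    rw [hJ2]
    have hstep : ∫⁻ x in O, fE x * ENNReal.ofReal (exp (-∑ i, (x i) ^ 2)) =
        ∫⁻ x in O, ∫⁻ u in Ioi (0:ℝ), fE x * (Ici (ρ x)).indicator w u := by
      refine setLIntegral_congr_fun_ae hO (Eventually.of_forall fun x hx => ?_)
      rw [hC2 x hx, ← lintegral_const_mul' _ _ (hfE_ne_top x)]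
    rw [hstep]
    have hFm : Measurable
        (fun z : (Fin n → ℝ) × ℝ => fE z.1 * (Ici (ρ z.1)).indicator w z.2) := by
      have heq : (fun z : (Fin n → ℝ) × ℝ => (Ici (ρ z.1)).indicator w z.2) =
          ({z : (Fin n → ℝ) × ℝ | ρ z.1 ≤ z.2}).indicator (fun z => w z.2) := by
        funext z
        by_cases h : ρ z.1 ≤ z.2 <;>
          simp [Set.indicator_apply, Set.mem_Ici, Set.mem_setOf_eq, h]
      refine (hfEm.comp measurable_fst).mul ?_
      rw [heq]
      exact (hwm.comp measurable_snd).indicator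
        (measurableSet_le (hρm.comp measurable_fst) measurable_snd)
    exact lintegral_lintegral_swap hFm.aemeasurable
  -- inner integral evaluation
  have hinner : ∀ u ∈ Ioi (0:ℝ), (∫⁻ x in O, fE x * (Ici (ρ x)).indicator w u) =
      w u * (ENNReal.ofReal (u ^ s) * I) := by
    intro u hu
    have hu' : (0:ℝ) < u := hu
    have hpt : ∀ x, fE x * (Ici (ρ x)).indicator w u =
        w u * ({x : Fin n → ℝ | ρ x ≤ u}).indicator fE x := by
      intro x
      simp only [Set.indicator_apply, Set.mem_Ici, Set.mem_setOf_eq]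
      by_cases h : ρ x ≤ u
      · rw [if_pos h, if_pos h]; ring
      · rw [if_neg h, if_neg h, mul_zero, mul_zero]
    have hset : MeasurableSet {x : Fin n → ℝ | ρ x ≤ u} :=
      measurableSet_le hρm measurable_const
    have hSu : {x : Fin n → ℝ | ρ x ≤ u} ∩ O =
        {x : Fin n → ℝ | ∑ i, (x i) ^ 2 ≤ u ^ 2 ∧ ∀ i, 0 < x i} := by
      ext x
      simp only [Set.mem_inter_iff, Set.mem_setOf_eq, hOdef, Set.mem_pi, Set.mem_univ,
        forall_true_left, Set.mem_Ioi, hρdef]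
      constructor
      · rintro ⟨h1, h2⟩
        refine ⟨?_, h2⟩
        have hA : (0:ℝ) ≤ ∑ i, (x i) ^ 2 := Finset.sum_nonneg fun i _ => sq_nonneg _
        calc ∑ i, (x i) ^ 2 = (Real.sqrt (∑ i, (x i) ^ 2)) ^ 2 := (Real.sq_sqrt hA).symm
          _ ≤ u ^ 2 := by
              have := Real.sqrt_nonneg (∑ i, (x i) ^ 2)
              nlinarith
      · rintro ⟨h1, h2⟩
        refine ⟨?_, h2⟩
        calc Real.sqrt (∑ i, (x i) ^ 2) ≤ Real.sqrt (u ^ 2) := Real.sqrt_le_sqrt h1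
          _ = u := Real.sqrt_sq hu'.le
    calc ∫⁻ x in O, fE x * (Ici (ρ x)).indicator w u
        = ∫⁻ x in O, w u * ({x : Fin n → ℝ | ρ x ≤ u}).indicator fE x :=
          setLIntegral_congr_fun_ae hO (Eventually.of_forall fun x _ => hpt x)
      _ = w u * ∫⁻ x in O, ({x : Fin n → ℝ | ρ x ≤ u}).indicator fE x :=
          lintegral_const_mul' _ _ ENNReal.ofReal_ne_top
      _ = w u * ∫⁻ x in {x : Fin n → ℝ | ρ x ≤ u} ∩ O, fE x := by
          rw [lintegral_indicator hset, Measure.restrict_restrict hset]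
      _ = w u * (ENNReal.ofReal (u ^ s) * I) := by
          rw [hSu]
          congr 1
          exact aux_scaling n p hp hu'
  -- evaluate the outer integral
  have hrm : Measurable (fun u : ℝ => ENNReal.ofReal (u ^ s)) :=
    ENNReal.measurable_ofReal.comp (aux_m_rpow s)
  have hJ4 : J = ENNReal.ofReal (Gamma (1 + s / 2)) * I := by
    rw [hJ3, setLIntegral_congr_fun_ae measurableSet_Ioi (Eventually.of_forall hinner)]
    simp_rw [← mul_assoc]
    rw [lintegral_mul_const (f := fun u => w u * ENNReal.ofReal (u ^ s)) _ (hwm.mul hrm)]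
    have hcong : ∀ u ∈ Ioi (0:ℝ), w u * ENNReal.ofReal (u ^ s) =
        ENNReal.ofReal (2 * u * exp (-u ^ 2) * u ^ s) := by
      intro u hu
      have hu' : (0:ℝ) < u := hu
      rw [← ENNReal.ofReal_mul (by nlinarith [Real.exp_pos (-u ^ 2)] :
        (0:ℝ) ≤ 2 * u * exp (-u ^ 2))]
    rw [setLIntegral_congr_fun_ae measurableSet_Ioi (Eventually.of_forall hcong),
      ← ofReal_integral_eq_lintegral_ofReal (aux_top_int hspos) ?_, aux_top hspos]
    filter_upwards [self_mem_ae_restrict measurableSet_Ioi] with u hu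
    have hu' : (0:ℝ) < u := hu
    simp only [Pi.zero_apply]
    exact mul_nonneg (mul_nonneg (by linarith) (Real.exp_pos _).le)
      (Real.rpow_nonneg hu'.le s)
  -- solve for I
  have hGpos : 0 < Gamma (1 + s / 2) := Real.Gamma_pos_of_pos (by linarith)
  have hApos : 0 < ∏ i, (Gamma (p i / 2) / 2) :=
    Finset.prod_pos fun i _ => div_pos (Real.Gamma_pos_of_pos (half_pos (hp i))) two_pos
  have hIval : I = ENNReal.ofReal ((∏ i, (Gamma (p i / 2) / 2)) / Gamma (1 + s / 2)) := by
    have hne0 : ENNReal.ofReal (Gamma (1 + s / 2)) ≠ 0 := (ENNReal.ofReal_pos.mpr hGpos).ne'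
    have hnetop : ENNReal.ofReal (Gamma (1 + s / 2)) ≠ ⊤ := ENNReal.ofReal_ne_top
    have h : ENNReal.ofReal (Gamma (1 + s / 2)) * I =
        ENNReal.ofReal (∏ i, (Gamma (p i / 2) / 2)) := hJ4.symm.trans hJ1
    rw [ENNReal.ofReal_div_of_pos hGpos, ENNReal.div_eq_inv_mul, ← h, ← mul_assoc,
      ENNReal.inv_mul_cancel hne0 hnetop, one_mul]
  -- final conversion
  have hnn : 0 ≤ᵐ[volume.restrict S] fun x : Fin n → ℝ => ∏ i, (x i) ^ (p i - 1) := by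
    refine (ae_restrict_iff' hS).mpr (Eventually.of_forall fun x hx => ?_)
    exact Finset.prod_nonneg fun i _ => Real.rpow_nonneg (hx.2 i).le _
  have hmf : Measurable fun x : Fin n → ℝ => ∏ i, (x i) ^ (p i - 1) := aux_measf n p
  rw [integral_eq_lintegral_of_nonneg_ae hnn hmf.aestronglyMeasurable]
  have hlin : ∫⁻ x in S, ENNReal.ofReal (∏ i, (x i) ^ (p i - 1)) = I := by
    rw [hIdef]
    refine setLIntegral_congr_fun_ae hS (Eventually.of_forall fun x hx => ?_)
    exact ENNReal.ofReal_prod_of_nonneg fun i _ => Real.rpow_nonneg (hx.2 i).le _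
  rw [hlin, hIval, ENNReal.toReal_ofReal (by positivity)]
  rw [Finset.prod_div_distrib, Finset.prod_const, Finset.card_univ, Fintype.card_fin]
  ring
end

section
/- Let p \ge 2 be an even integer and R > 0. For each integer n \ge 2 and each real x with |x| \le n^{1/p}R, let \rho_n(x) = [p \Gamma(1 + n/p) / (2 \Gamma(1/p) \Gamma(1 + (n-1)/p))] \cdot (nR^p - x^p)^{(n-1)/p} / (nR^p)^{n/p} be the marginal density of the first coordinate of the uniform distribution on the ball M_n = {x \in \mathbb{R}^n : \sum x_k^p \le nR^p}. Then for every fixed real x, \rho_n(x) converges as n \to \infty to \rho(x) = (1 / (2 R \Gamma(1/p) p^{1/p - 1})) e^{-x^p/(pR^p)}. -/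
open MeasureTheory Real Filter Topology

set_option maxHeartbeats 1000000

lemma wendel {s : ℝ} (hs0 : 0 < s) (hs1 : s < 1) :
    Tendsto (fun y : ℝ => Gamma (y + s) / (Gamma y * y ^ s)) atTop (𝓝 1) := by
  have hlow : Tendsto (fun y : ℝ => (y / (y + s)) ^ (1 - s)) atTop (𝓝 1) := by
    have h1 : Tendsto (fun y : ℝ => y / (y + s)) atTop (𝓝 1) := by
      have h0 : Tendsto (fun y : ℝ => 1 - s / (y + s)) atTop (𝓝 (1 - 0)) := by
        exact tendsto_const_nhds.sub
          (tendsto_const_nhds.div_atTop (tendsto_atTop_add_const_right _ s tendsto_id))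
      rw [sub_zero] at h0
      apply h0.congr'
      filter_upwards [eventually_gt_atTop (0 : ℝ)] with y hy
      have : y + s ≠ 0 := by positivity
      field_simp
      ring
    have := h1.rpow_const (Or.inr (by linarith : (0:ℝ) ≤ 1 - s))
    simpa using this
  apply tendsto_of_tendsto_of_tendsto_of_le_of_le' hlow tendsto_const_nhds
  · -- lower bound
    filter_upwards [eventually_gt_atTop (0 : ℝ)] with y hy
    have hys : 0 < y + s := by linarith
    have hG : 0 < Gamma y := Gamma_pos_of_pos hy
    have hGs : 0 < Gamma (y + s) := Gamma_pos_of_pos hys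
    have key : Gamma (y + 1) ≤ Gamma (y + s) ^ s * Gamma (y + s + 1) ^ (1 - s) := by
      have := Gamma_mul_add_mul_le_rpow_Gamma_mul_rpow_Gamma (s := y + s) (t := y + s + 1)
        (a := s) (b := 1 - s) hys (by linarith) hs0 (by linarith) (by ring)
      rwa [show s * (y + s) + (1 - s) * (y + s + 1) = y + 1 by ring] at this
    rw [Gamma_add_one hy.ne', Gamma_add_one hys.ne', mul_rpow hys.le hGs.le] at key
    have key2 : y * Gamma y ≤ Gamma (y + s) * (y + s) ^ (1 - s) := by
      calc y * Gamma y ≤ Gamma (y+s) ^ s * ((y+s) ^ (1-s) * Gamma (y+s) ^ (1-s)) := key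
        _ = (Gamma (y+s) ^ s * Gamma (y+s) ^ (1-s)) * (y+s) ^ (1-s) := by ring
        _ = Gamma (y + s) * (y + s) ^ (1-s) := by
            rw [← rpow_add hGs, show s + (1-s) = 1 by ring, rpow_one]
    rw [div_rpow hy.le hys.le, div_le_div_iff₀ (by positivity) (by positivity)]
    calc y ^ (1-s) * (Gamma y * y ^ s) = (y ^ (1-s) * y ^ s) * Gamma y := by ring
      _ = y * Gamma y := by rw [← rpow_add hy, show (1-s) + s = 1 by ring, rpow_one]
      _ ≤ Gamma (y + s) * (y + s) ^ (1 - s) := key2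
  · -- upper bound
    filter_upwards [eventually_gt_atTop (0 : ℝ)] with y hy
    have hG : 0 < Gamma y := Gamma_pos_of_pos hy
    have key : Gamma (y + s) ≤ Gamma y ^ (1 - s) * Gamma (y + 1) ^ s := by
      have := Gamma_mul_add_mul_le_rpow_Gamma_mul_rpow_Gamma (s := y) (t := y + 1)
        (a := 1 - s) (b := s) hy (by linarith) (by linarith : (0:ℝ) < 1 - s) hs0 (by ring)
      rwa [show (1 - s) * y + s * (y + 1) = y + s by ring] at this
    rw [div_le_one (by positivity)]
    calc Gamma (y + s) ≤ Gamma y ^ (1 - s) * Gamma (y + 1) ^ s := key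
      _ = Gamma y ^ (1-s) * (Gamma y ^ s * y ^ s) := by
          rw [Gamma_add_one hy.ne', mul_rpow hy.le hG.le]; ring
      _ = Gamma y * y ^ s := by
          rw [← mul_assoc, ← rpow_add hG, show (1-s) + s = 1 by ring, rpow_one]



/-- For fixed `x`, the marginal density `ρₙ(x)` of the first coordinate of the uniform
distribution on the `ℓᵖ` ball `Mₙ = {x ∈ ℝⁿ : ∑ xₖᵖ ≤ nRᵖ}` (`p` even) converges, as
`n → ∞`, to `ρ(x) = e^(-xᵖ/(pRᵖ)) / (2 R Γ(1/p) p^(1/p - 1))`. -/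
theorem stmt_3 (p : ℕ) (hp : Even p) (hp2 : 2 ≤ p) (R : ℝ) (hR : 0 < R) (x : ℝ) :
    Tendsto
      (fun n : ℕ =>
        ((p : ℝ) * Gamma (1 + (n : ℝ) / p) /
            (2 * Gamma (1 / (p : ℝ)) * Gamma (1 + ((n : ℝ) - 1) / p))) *
          (((n : ℝ) * R ^ p - x ^ p) ^ (((n : ℝ) - 1) / p) /
            ((n : ℝ) * R ^ p) ^ ((n : ℝ) / p)))
      atTop
      (nhds (1 / (2 * R * Gamma (1 / (p : ℝ)) * (p : ℝ) ^ ((1 : ℝ) / p - 1)) *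
        Real.exp (-(x ^ p) / (p * R ^ p)))) := by
  have hp1 : (1:ℝ) < (p:ℝ) := by exact_mod_cast lt_of_lt_of_le one_lt_two hp2
  have hp0 : (0:ℝ) < (p:ℝ) := by linarith
  set s : ℝ := 1 / (p:ℝ) with hs
  have hs0 : 0 < s := by positivity
  have hs1 : s < 1 := by rw [hs, div_lt_one hp0]; exact hp1
  have hRp : (0:ℝ) < R ^ p := pow_pos hR p
  set t : ℝ := x ^ p / R ^ p with htdef
  have ht0 : 0 ≤ t := div_nonneg (hp.pow_nonneg x) hRp.le
  have hxt : x ^ p = t * R ^ p := by rw [htdef]; field_simp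
  have hGs : 0 < Gamma s := Gamma_pos_of_pos hs0
  -- y n → ∞
  have hy_top : Tendsto (fun n : ℕ => 1 + ((n:ℝ) - 1) / p) atTop atTop := by
    apply tendsto_atTop_add_const_left
    apply Tendsto.atTop_div_const hp0
    have h : Tendsto (fun n : ℕ => (n:ℝ) + (-1)) atTop atTop :=
      tendsto_atTop_add_const_right _ (-1) tendsto_natCast_atTop_atTop
    exact h.congr (fun n => by rw [sub_eq_add_neg])
  -- Gamma ratio factor
  have hg : Tendsto (fun n : ℕ => Gamma ((1 + ((n:ℝ) - 1) / p) + s) /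
      (Gamma (1 + ((n:ℝ) - 1) / p) * (1 + ((n:ℝ) - 1) / p) ^ s)) atTop (𝓝 1) := by
    have := (wendel hs0 hs1).comp hy_top
    exact this
  -- power factor
  have hh : Tendsto (fun n : ℕ => ((1 + ((n:ℝ) - 1) / p) / ((n:ℝ) * R ^ p)) ^ s)
      atTop (𝓝 ((1 / ((p:ℝ) * R ^ p)) ^ s)) := by
    apply Tendsto.rpow_const
    · have h0 : Tendsto (fun n : ℕ => (1 / (n:ℝ) * (1 - 1 / (p:ℝ)) + 1 / (p:ℝ)) / R ^ p)
          atTop (𝓝 ((0 * (1 - 1 / (p:ℝ)) + 1 / (p:ℝ)) / R ^ p)) :=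
        ((tendsto_one_div_atTop_nhds_zero_nat.mul_const _).add tendsto_const_nhds).div_const _
      rw [show (0 * (1 - 1 / (p:ℝ)) + 1 / (p:ℝ)) / R ^ p = 1 / ((p:ℝ) * R ^ p) from by
        rw [zero_mul, zero_add, div_div]] at h0
      apply h0.congr'
      filter_upwards [eventually_gt_atTop 0] with n hn
      have hn0 : ((n:ℝ)) ≠ 0 := Nat.cast_ne_zero.mpr hn.ne'
      field_simp
      ring
    · right; exact hs0.le
  -- exponential factor
  have he : Tendsto (fun n : ℕ => ((1:ℝ) - t / n) ^ (((n:ℝ) - 1) / p))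
      atTop (𝓝 (Real.exp (-t / p))) := by
    have hA : Tendsto (fun n : ℕ => (n:ℝ) * Real.log (1 + (-t) / (n:ℝ))) atTop (𝓝 (-t)) :=
      (tendsto_mul_log_one_add_div_atTop (-t)).comp tendsto_natCast_atTop_atTop
    have hB : Tendsto (fun n : ℕ => ((n:ℝ) - 1) / ((n:ℝ) * p)) atTop (𝓝 ((1 - 0) / (p:ℝ))) := by
      have := (((tendsto_const_nhds (x := (1:ℝ))).sub tendsto_one_div_atTop_nhds_zero_nat).div_const (p:ℝ))
      apply this.congr'
      filter_upwards [eventually_gt_atTop 0] with n hn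
      have hn0 : ((n:ℝ)) ≠ 0 := Nat.cast_ne_zero.mpr hn.ne'
      field_simp
    have hI : Tendsto (fun n : ℕ => (((n:ℝ) - 1) / ((n:ℝ) * p)) *
        ((n:ℝ) * Real.log (1 + (-t) / (n:ℝ)))) atTop (𝓝 (-t / p)) := by
      have := hB.mul hA
      rwa [show (1 - 0) / (p:ℝ) * (-t) = -t / p by ring] at this
    have hE := (Real.continuous_exp.tendsto _).comp hI
    apply hE.congr'
    filter_upwards [eventually_gt_atTop 0, tendsto_natCast_atTop_atTop.eventually_gt_atTop t]
      with n hn hnt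
    have hn0 : ((n:ℝ)) ≠ 0 := Nat.cast_ne_zero.mpr hn.ne'
    have hT : (0:ℝ) < 1 - t / n := by
      rw [sub_pos, div_lt_one (by positivity)]; exact hnt
    simp only [Function.comp_apply]
    rw [rpow_def_of_pos hT, show (1:ℝ) - t / n = 1 + (-t) / (n:ℝ) by ring]
    congr 1
    field_simp
  -- combine
  have hcomb := (tendsto_const_nhds (x := (p:ℝ) / (2 * Gamma s))).mul (hg.mul (hh.mul he))
  rw [show (p:ℝ) / (2 * Gamma s) * (1 * ((1 / ((p:ℝ) * R ^ p)) ^ s * Real.exp (-t / p)))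
      = 1 / (2 * R * Gamma s * (p:ℝ) ^ (s - 1)) * Real.exp (-(x ^ p) / (p * R ^ p)) by
    have hA1 : ((1:ℝ) / ((p:ℝ) * R ^ p)) ^ s = (((p:ℝ) ^ s)⁻¹ : ℝ) * R⁻¹ := by
      rw [one_div, inv_rpow (by positivity), mul_rpow hp0.le hRp.le,
        ← rpow_natCast R p, ← rpow_mul hR.le,
        show (p:ℝ) * s = 1 from by rw [hs]; field_simp, rpow_one, mul_inv]
    have hexp : -t / (p:ℝ) = -(x ^ p) / (p * R ^ p) := by
      rw [htdef, neg_div, neg_div, div_div, mul_comm (R ^ p) (p:ℝ)]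
    have hps : (p:ℝ) ^ (s - 1) = (p:ℝ) ^ s / (p:ℝ) := by
      rw [rpow_sub hp0, rpow_one]
    have hpss : (0:ℝ) < (p:ℝ) ^ s := rpow_pos_of_pos hp0 s
    rw [hA1, hexp, hps]
    field_simp] at hcomb
  apply hcomb.congr'
  filter_upwards [eventually_gt_atTop 0, tendsto_natCast_atTop_atTop.eventually_gt_atTop t]
    with n hn hnt
  have hn0 : ((n:ℝ)) ≠ 0 := Nat.cast_ne_zero.mpr hn.ne'
  have h1n : (1:ℝ) ≤ (n:ℝ) := by exact_mod_cast Nat.one_le_cast.mpr hn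
  have hy1 : (0:ℝ) < 1 + ((n:ℝ) - 1) / p := by
    have : (0:ℝ) ≤ ((n:ℝ) - 1) / p := div_nonneg (by linarith) hp0.le
    linarith
  have hX : (0:ℝ) < (n:ℝ) * R ^ p := by positivity
  have hT : (0:ℝ) < 1 - t / n := by
    rw [sub_pos, div_lt_one (by positivity)]; exact hnt
  have hGy : 0 < Gamma (1 + ((n:ℝ) - 1) / p) := Gamma_pos_of_pos hy1
  have hyps : 0 < (1 + ((n:ℝ) - 1) / p) ^ s := rpow_pos_of_pos hy1 s
  have hXs : 0 < ((n:ℝ) * R ^ p) ^ s := rpow_pos_of_pos hX s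
  have hX1 : 0 < ((n:ℝ) * R ^ p) ^ (((n:ℝ) - 1) / p) := rpow_pos_of_pos hX _
  rw [show (1:ℝ) + (n:ℝ) / p = (1 + ((n:ℝ) - 1) / p) + s from by rw [hs]; ring,
    show (n:ℝ) * R ^ p - x ^ p = ((n:ℝ) * R ^ p) * (1 - t / n) from by
      rw [htdef]; field_simp,
    mul_rpow hX.le hT.le,
    show (n:ℝ) / (p:ℝ) = ((n:ℝ) - 1) / p + s from by rw [hs]; ring,
    rpow_add hX (((n:ℝ) - 1) / p) s,
    div_rpow hy1.le hX.le]
  have key : ∀ P G a b c X1 Xs T : ℝ, b ≠ 0 → c ≠ 0 → X1 ≠ 0 → Xs ≠ 0 → G ≠ 0 →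
      P * a / (2 * G * b) * ((X1 * T) / (X1 * Xs)) = P / (2 * G) * (a / (b * c) * (c / Xs * T)) := by
    intros P G a b c X1 Xs T hb hc h1 h2 hG
    field_simp
  exact (key _ _ _ _ _ _ _ _ hGy.ne' hyps.ne' hX1.ne' hXs.ne' hGs.ne').symm
end

section
/- Let p \ge 1 be a real number, R > 0, and n \ge 2 an integer. Define M_n^+ = {(x_1,...,x_n) \in \mathbb{R}^n : x_k \ge 0 for all k, x_1^p + ... + x_n^p \le nR^p}. Then for every real x with 0 \le x \le n^{1/p} R, the marginal density of the first coordinate under the uniform probability measure on M_n^+, namely \rho_n(x) = Vol_{n-1}({(x_2,...,x_n) : x_k \ge 0, x_2^p + ... + x_n^p \le nR^p - x^p}) / Vol_n(M_n^+), equals [p \Gamma(1 + n/p) / (\Gamma(1/p) \Gamma(1 + (n-1)/p))] \cdot (nR^p - x^p)^{(n-1)/p} / (nR^p)^{n/p}. -/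
open MeasureTheory Real Set
open scoped ENNReal NNReal

theorem map_abs_volume : (volume : Measure ℝ).map (abs : ℝ → ℝ) = (2 : ℝ≥0∞) • volume.restrict (Set.Ici 0) := by
  ext s hs
  rw [Measure.map_apply measurable_abs hs, Measure.smul_apply, Measure.restrict_apply hs,
    smul_eq_mul, two_mul]
  have hdecomp : (abs : ℝ → ℝ) ⁻¹' s = (s ∩ Ici 0) ∪ ((-s) ∩ Iio 0) := by
    ext x
    rcases le_or_gt 0 x with h | h
    · simp [abs_of_nonneg h, h, not_lt.mpr h, Set.mem_neg]
    · simp [abs_of_neg h, h, not_le.mpr h, Set.mem_neg]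
  rw [hdecomp, measure_union (disjoint_left.mpr fun x hx1 hx2 => (not_lt.mpr (mem_Ici.mp hx1.2)) hx2.2)
    (hs.neg.inter measurableSet_Iio)]
  congr 1
  have h1 : volume ((-s) ∩ Iio (0:ℝ)) = volume (-((-s) ∩ Iio 0)) :=
    (Measure.measure_neg volume _).symm
  rw [h1, show -(-s ∩ Iio 0) = s ∩ Ioi (0:ℝ) by ext y; simp [Set.mem_neg]]
  exact measure_congr ((Filter.EventuallyEq.refl _ _).inter Ioi_ae_eq_Ici)

theorem orthant_volume (m : ℕ) [NeZero m] {p : ℝ} (hp : 1 ≤ p) {t : ℝ} (ht : 0 ≤ t) :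
    volume {y : Fin m → ℝ | (∀ i, 0 ≤ y i) ∧ ∑ i, (y i) ^ p ≤ t} =
      ENNReal.ofReal (t ^ ((m : ℝ) / p) * Gamma (1 / p + 1) ^ m / Gamma ((m : ℝ) / p + 1)) := by
  have hp0 : 0 < p := lt_of_lt_of_le one_pos hp
  set A := {y : Fin m → ℝ | (∀ i, 0 ≤ y i) ∧ ∑ i, (y i) ^ p ≤ t} with hAdef
  have hA : MeasurableSet A := by
    have : A = (⋂ i, {y : Fin m → ℝ | 0 ≤ y i}) ∩ {y | ∑ i, (y i) ^ p ≤ t} := by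
      ext y; simp [hAdef, Set.mem_iInter, forall_and]
    rw [this]
    exact (MeasurableSet.iInter fun i =>
        measurableSet_le measurable_const (measurable_pi_apply i)).inter
      (measurableSet_le (Finset.measurable_sum _ fun i _ =>
        ((Real.continuous_rpow_const (le_of_lt hp0)).measurable.comp
          (measurable_pi_apply i))) measurable_const)
  -- the full ball
  have hball : (fun (a : Fin m → ℝ) i => |a i|) ⁻¹' A =
      {x : Fin m → ℝ | (∑ i, |x i| ^ p) ^ (1 / p) ≤ t ^ (1 / p)} := by
    ext x
    have hs : 0 ≤ ∑ i, |x i| ^ p := Finset.sum_nonneg fun i _ => rpow_nonneg (abs_nonneg _) _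
    simp only [Set.mem_preimage, hAdef, Set.mem_setOf_eq]
    rw [rpow_le_rpow_iff hs ht (one_div_pos.mpr hp0)]
    exact ⟨fun h => h.2, fun h => ⟨fun i => abs_nonneg _, h⟩⟩
  -- measure preserving map
  have hprev : MeasurePreserving (fun (a : Fin m → ℝ) i => |a i|) volume
      (Measure.pi fun _ : Fin m => (volume : Measure ℝ).map (abs : ℝ → ℝ)) := by
    haveI : SigmaFinite ((volume : Measure ℝ).map (abs : ℝ → ℝ)) := by
      rw [map_abs_volume, show ((2:ℝ≥0∞)) = ((2:ℝ≥0):ℝ≥0∞) from rfl, ← ENNReal.smul_def]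
      infer_instance
    rw [show (volume : Measure (Fin m → ℝ)) = Measure.pi fun _ => volume from rfl]
    exact measurePreserving_pi _ _ fun i => ⟨measurable_abs, rfl⟩
  -- the pi measure is 2^m times restricted volume
  have hO : MeasurableSet {y : Fin m → ℝ | ∀ i, 0 ≤ y i} := by
    have : {y : Fin m → ℝ | ∀ i, 0 ≤ y i} = ⋂ i, {y : Fin m → ℝ | 0 ≤ y i} := by
      ext y; simp [Set.mem_iInter]
    rw [this]
    exact MeasurableSet.iInter fun i =>
      measurableSet_le measurable_const (measurable_pi_apply i)
  have hpi : (Measure.pi fun _ : Fin m => (volume : Measure ℝ).map (abs : ℝ → ℝ)) =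
      ((2 : ℝ≥0∞) ^ m) • volume.restrict {y : Fin m → ℝ | ∀ i, 0 ≤ y i} := by
    simp_rw [map_abs_volume]
    haveI : SigmaFinite ((2:ℝ≥0∞) • (volume : Measure ℝ).restrict (Ici 0)) := by
      rw [show ((2:ℝ≥0∞)) = ((2:ℝ≥0):ℝ≥0∞) from rfl, ← ENNReal.smul_def]
      infer_instance
    refine Measure.pi_eq (μ := fun _ : Fin m => (2:ℝ≥0∞) • (volume : Measure ℝ).restrict (Ici 0)) fun s hs => ?_
    rw [Measure.smul_apply, Measure.restrict_apply (MeasurableSet.univ_pi hs), smul_eq_mul]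
    have : (Set.pi Set.univ s) ∩ {y : Fin m → ℝ | ∀ i, 0 ≤ y i} =
        Set.pi Set.univ (fun i => s i ∩ Ici 0) := by
      ext y; simp [Set.mem_pi, forall_and]
    rw [this, volume_pi_pi]
    simp_rw [Measure.smul_apply, Measure.restrict_apply (hs _), smul_eq_mul]
    rw [Finset.prod_mul_distrib, Finset.prod_const, Finset.card_univ, Fintype.card_fin]
  -- combine
  have key : (2 : ℝ≥0∞) ^ m * volume A =
      volume {x : Fin m → ℝ | (∑ i, |x i| ^ p) ^ (1 / p) ≤ t ^ (1 / p)} := by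
    rw [← hball, ← Measure.map_apply hprev.measurable hA, hprev.map_eq, hpi,
      Measure.smul_apply, smul_eq_mul, Measure.restrict_apply hA]
    congr 1
    rw [Set.inter_eq_self_of_subset_left fun y hy => hy.1]
  rw [volume_sum_rpow_le _ hp] at key
  simp only [Fintype.card_fin] at key
  have hG1 : 0 < Gamma (1 / p + 1) := Gamma_pos_of_pos (by positivity)
  have hGm : 0 < Gamma ((m : ℝ) / p + 1) := Gamma_pos_of_pos (by positivity)
  refine (ENNReal.mul_right_inj (a := (2 : ℝ≥0∞) ^ m) (by positivity) (by simp)).mp ?_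
  rw [key]
  rw [← ENNReal.ofReal_pow (rpow_nonneg ht _), ← ENNReal.ofReal_mul (by positivity),
    show ((2 : ℝ≥0∞) ^ m) = ENNReal.ofReal (2 ^ m) by
      simp [ENNReal.ofReal_pow, ENNReal.ofReal_ofNat],
    ← ENNReal.ofReal_mul (by positivity)]
  congr 1
  rw [← rpow_natCast (t ^ (1/p)) m, ← rpow_mul ht, mul_pow,
    show (1/p * (m:ℕ) : ℝ) = (m:ℝ)/p by push_cast; ring]
  ring



/-- Marginal density of the first coordinate of the uniform distribution on the positive part
`Mₙ⁺ = {x ∈ ℝⁿ : xₖ ≥ 0, x₁ᵖ + ⋯ + xₙᵖ ≤ nRᵖ}` of the `ℓᵖ` ball (`p ≥ 1` real): for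
`0 ≤ x ≤ n^(1/p) R`, the ratio of the `(n-1)`-volume of the slice at `x₁ = x` to the
`n`-volume of `Mₙ⁺` equals
`[p Γ(1+n/p) / (Γ(1/p) Γ(1+(n-1)/p))] · (nRᵖ - xᵖ)^((n-1)/p) / (nRᵖ)^(n/p)`. -/
theorem stmt_5 (p : ℝ) (hp : 1 ≤ p) (R : ℝ) (hR : 0 < R)
    (n : ℕ) (hn : 2 ≤ n) (x : ℝ) (hx0 : 0 ≤ x) (hx : x ≤ (n : ℝ) ^ (1 / p) * R) :
    (volume {y : Fin (n - 1) → ℝ |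
          (∀ i, 0 ≤ y i) ∧ ∑ i, (y i) ^ p ≤ (n : ℝ) * R ^ p - x ^ p}).toReal /
        (volume {z : Fin n → ℝ |
          (∀ i, 0 ≤ z i) ∧ ∑ i, (z i) ^ p ≤ (n : ℝ) * R ^ p}).toReal =
      (p * Gamma (1 + (n : ℝ) / p) / (Gamma (1 / p) * Gamma (1 + ((n : ℝ) - 1) / p))) *
        (((n : ℝ) * R ^ p - x ^ p) ^ (((n : ℝ) - 1) / p) /
          ((n : ℝ) * R ^ p) ^ ((n : ℝ) / p)) := by
  obtain ⟨m, rfl⟩ : ∃ m, n = m + 1 := ⟨n - 1, by omega⟩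
  have hm : 1 ≤ m := by omega
  have hp0 : 0 < p := lt_of_lt_of_le one_pos hp
  haveI : NeZero (m + 1) := ⟨by omega⟩
  haveI : NeZero (m + 1 - 1) := ⟨by omega⟩
  have hRp : 0 < R ^ p := rpow_pos_of_pos hR p
  have hT : 0 < ((m + 1 : ℕ) : ℝ) * R ^ p := by positivity
  have hxp : x ^ p ≤ ((m + 1 : ℕ) : ℝ) * R ^ p := by
    calc x ^ p ≤ (((m + 1 : ℕ) : ℝ) ^ (1 / p) * R) ^ p := rpow_le_rpow hx0 hx hp0.le
    _ = ((m + 1 : ℕ) : ℝ) * R ^ p := by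
        rw [mul_rpow (by positivity) hR.le, ← rpow_mul (by positivity),
          one_div, inv_mul_cancel₀ hp0.ne', rpow_one]
  have ht : (0:ℝ) ≤ ((m + 1 : ℕ) : ℝ) * R ^ p - x ^ p := sub_nonneg.mpr hxp
  rw [orthant_volume (m + 1 - 1) hp ht, orthant_volume (m + 1) hp hT.le]
  have hGp : 0 < Gamma (1 / p) := Gamma_pos_of_pos (by positivity)
  have hG1 : Gamma (1 / p + 1) = (1 / p) * Gamma (1 / p) := Gamma_add_one (by positivity)
  have hG1pos : 0 < Gamma (1 / p + 1) := Gamma_pos_of_pos (by positivity)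
  have hGb : 0 < Gamma (((m + 1 - 1 : ℕ) : ℝ) / p + 1) := Gamma_pos_of_pos (by positivity)
  have hGc : 0 < Gamma (((m + 1 : ℕ) : ℝ) / p + 1) := Gamma_pos_of_pos (by positivity)
  rw [ENNReal.toReal_ofReal (by positivity), ENNReal.toReal_ofReal (by positivity)]
  simp only [Nat.add_sub_cancel] at *
  push_cast
  rw [show ((m:ℝ) + 1 - 1) = (m:ℝ) by ring,
    show (1 + ((m:ℝ) + 1)/p) = ((m:ℝ) + 1)/p + 1 by ring,
    show (1 + (m:ℝ)/p) = (m:ℝ)/p + 1 by ring,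
    pow_succ, hG1]
  have hTc : 0 < (((m:ℝ) + 1) * R ^ p) ^ (((m:ℝ) + 1) / p) := rpow_pos_of_pos (by push_cast at hT ⊢; exact hT) _
  have hGb' : 0 < Gamma ((m:ℝ) / p + 1) := by push_cast at hGb; exact hGb
  have hGc' : 0 < Gamma (((m:ℝ) + 1) / p + 1) := by push_cast at hGc; exact hGc
  have hG1m : (0:ℝ) < Gamma (1 / p + 1) ^ m := pow_pos hG1pos m
  field_simp
end

section
/- Let p \ge 1 be a real number and R > 0. For each integer n \ge 2 and each real x with 0 \le x \le n^{1/p}R, let \rho_n(x) = [p \Gamma(1 + n/p) / (\Gamma(1/p) \Gamma(1 + (n-1)/p))] \cdot (nR^p - x^p)^{(n-1)/p} / (nR^p)^{n/p} be the marginal density of the first coordinate of the uniform distribution on M_n^+ = {x \in \mathbb{R}^n : x_k \ge 0, \sum x_k^p \le nR^p}. Then for every fixed real x \ge 0, \rho_n(x) converges as n \to \infty to \rho(x) = (1 / (R \Gamma(1/p) p^{1/p - 1})) e^{-x^p/(pR^p)}. -/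
open MeasureTheory Real Filter Topology

lemma gamma_upper_aux {a y : ℝ} (ha : 0 < a) (ha1 : a ≤ 1) (hy : 0 < y) :
    Real.Gamma (y + a) ≤ Real.Gamma y * y ^ a := by
  have hΓy : 0 < Real.Gamma y := Real.Gamma_pos_of_pos hy
  have hΓ1 : 0 < Real.Gamma (y + 1) := Real.Gamma_pos_of_pos (by linarith)
  have hΓa : 0 < Real.Gamma (y + a) := Real.Gamma_pos_of_pos (by linarith)
  have hc := Real.convexOn_log_Gamma.2 (Set.mem_Ioi.2 hy)
    (Set.mem_Ioi.2 (by linarith : (0:ℝ) < y + 1))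
    (by linarith : (0:ℝ) ≤ 1 - a) ha.le (by ring)
  simp only [smul_eq_mul, Function.comp_apply] at hc
  have harg : (1 - a) * y + a * (y + 1) = y + a := by ring
  rw [harg] at hc
  have := Real.exp_le_exp.2 hc
  rw [Real.exp_log hΓa, Real.exp_add] at this
  calc Real.Gamma (y + a)
      ≤ Real.exp ((1 - a) * Real.log (Real.Gamma y)) *
        Real.exp (a * Real.log (Real.Gamma (y + 1))) := this
    _ = Real.Gamma y ^ (1 - a) * Real.Gamma (y + 1) ^ a := by
        rw [Real.rpow_def_of_pos hΓy, Real.rpow_def_of_pos hΓ1]; ring_nf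
    _ = Real.Gamma y * y ^ a := by
        rw [Real.Gamma_add_one hy.ne', Real.mul_rpow hy.le hΓy.le,
          show Real.Gamma y ^ (1 - a) * (y ^ a * Real.Gamma y ^ a)
            = (Real.Gamma y ^ (1 - a) * Real.Gamma y ^ a) * y ^ a by ring,
          ← Real.rpow_add hΓy]
        norm_num

lemma gamma_lower_aux {a y : ℝ} (ha : 0 < a) (ha1 : a ≤ 1) (hy : 0 < y) :
    Real.Gamma y * y ≤ Real.Gamma (y + a) * (y + a) ^ (1 - a) := by
  have hya : 0 < y + a := by linarith
  have hΓa : 0 < Real.Gamma (y + a) := Real.Gamma_pos_of_pos hya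
  have hΓ1 : 0 < Real.Gamma (y + 1) := Real.Gamma_pos_of_pos (by linarith)
  have hc := Real.convexOn_log_Gamma.2 (Set.mem_Ioi.2 hya)
    (Set.mem_Ioi.2 (by linarith : (0:ℝ) < y + 1 + a))
    ha.le (by linarith : (0:ℝ) ≤ 1 - a) (by ring)
  simp only [smul_eq_mul, Function.comp_apply] at hc
  have harg : a * (y + a) + (1 - a) * (y + 1 + a) = y + 1 := by ring
  rw [harg] at hc
  have h2 := Real.exp_le_exp.2 hc
  rw [Real.exp_log hΓ1, Real.exp_add] at h2
  have key : Real.Gamma (y + 1) ≤ Real.Gamma (y + a) * (y + a) ^ (1 - a) := by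
    calc Real.Gamma (y + 1)
        ≤ Real.exp (a * Real.log (Real.Gamma (y + a))) *
          Real.exp ((1 - a) * Real.log (Real.Gamma (y + 1 + a))) := h2
      _ = Real.Gamma (y + a) ^ a * Real.Gamma (y + 1 + a) ^ (1 - a) := by
          rw [Real.rpow_def_of_pos hΓa, Real.rpow_def_of_pos (Real.Gamma_pos_of_pos (by linarith))]
          ring_nf
      _ = Real.Gamma (y + a) * (y + a) ^ (1 - a) := by
          rw [show y + 1 + a = (y + a) + 1 by ring, Real.Gamma_add_one hya.ne',
            Real.mul_rpow hya.le hΓa.le,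
            show Real.Gamma (y+a) ^ a * ((y+a) ^ (1-a) * Real.Gamma (y+a) ^ (1-a))
              = (Real.Gamma (y+a) ^ a * Real.Gamma (y+a) ^ (1-a)) * (y+a) ^ (1-a) by ring,
            ← Real.rpow_add hΓa]
          norm_num
  calc Real.Gamma y * y = Real.Gamma (y + 1) := (Real.Gamma_add_one hy.ne').symm ▸ by ring
    _ ≤ _ := key

/-- For fixed `x ≥ 0`, the marginal density `ρₙ(x)` of the first coordinate of the uniform
distribution on `Mₙ⁺ = {x ∈ ℝⁿ : xₖ ≥ 0, ∑ xₖᵖ ≤ nRᵖ}` (`p ≥ 1` real) converges, as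
`n → ∞`, to `ρ(x) = e^(-xᵖ/(pRᵖ)) / (R Γ(1/p) p^(1/p - 1))`. -/
theorem stmt_6 (p : ℝ) (hp : 1 ≤ p) (R : ℝ) (hR : 0 < R) (x : ℝ) (hx : 0 ≤ x) :
    Tendsto
      (fun n : ℕ =>
        (p * Gamma (1 + (n : ℝ) / p) / (Gamma (1 / p) * Gamma (1 + ((n : ℝ) - 1) / p))) *
          (((n : ℝ) * R ^ p - x ^ p) ^ (((n : ℝ) - 1) / p) /
            ((n : ℝ) * R ^ p) ^ ((n : ℝ) / p)))
      atTop
      (nhds (1 / (R * Gamma (1 / p) * p ^ (1 / p - 1)) *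
        Real.exp (-(x ^ p) / (p * R ^ p)))) := by
  have hp0 : 0 < p := lt_of_lt_of_le one_pos hp
  set a : ℝ := 1 / p with ha_def
  have ha : 0 < a := by positivity
  have ha1 : a ≤ 1 := by rw [ha_def]; exact div_le_one_of_le₀ hp (by positivity)
  have hRp : 0 < R ^ p := rpow_pos_of_pos hR p
  set c : ℝ := x ^ p / R ^ p with hc_def
  have hc0 : 0 ≤ c := by positivity
  set y : ℕ → ℝ := fun n => 1 + ((n : ℝ) - 1) / p with hy_def
  have hy_tendsto : Tendsto y atTop atTop := by
    have h1 : Tendsto (fun n : ℕ => (n : ℝ) - 1) atTop atTop := by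
      simpa [sub_eq_add_neg] using
        tendsto_atTop_add_const_right atTop (-1 : ℝ) (tendsto_natCast_atTop_atTop (R := ℝ))
    exact tendsto_atTop_add_const_left atTop 1 (h1.atTop_div_const hp0)
  have hy_pos : ∀ᶠ n : ℕ in atTop, 0 < y n := hy_tendsto.eventually_gt_atTop 0
  -- Factor 1: ratio of Gamma functions
  have T1 : Tendsto (fun n => Gamma (y n + a) / (Gamma (y n) * y n ^ a)) atTop (𝓝 1) := by
    have hlow : Tendsto (fun n => (1 + a / y n) ^ (a - 1)) atTop (𝓝 1) := by
      have h1 : Tendsto (fun n => 1 + a / y n) atTop (𝓝 1) := by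
        simpa using tendsto_const_nhds.add (tendsto_const_nhds.div_atTop hy_tendsto)
      simpa using h1.rpow_const (Or.inl one_ne_zero)
    refine tendsto_of_tendsto_of_tendsto_of_le_of_le' hlow tendsto_const_nhds ?_ ?_
    · filter_upwards [hy_pos] with n hy0
      have hΓ : 0 < Gamma (y n) := Real.Gamma_pos_of_pos hy0
      have hya : 0 < y n + a := by linarith
      have hlb := gamma_lower_aux ha ha1 hy0
      have key : (1 + a / y n) ^ (a - 1) * (Gamma (y n) * y n ^ a) ≤ Gamma (y n + a) := by
        have e1 : (1 + a / y n) ^ (a - 1) = (y n) ^ (1 - a) * (y n + a) ^ (a - 1) := by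
          rw [show (1 : ℝ) + a / y n = (y n + a) / y n by field_simp,
            Real.div_rpow hya.le hy0.le,
            show (1 : ℝ) - a = -(a - 1) by ring, Real.rpow_neg hy0.le]
          field_simp
        rw [e1]
        have e2 : (y n) ^ (1 - a) * (y n + a) ^ (a - 1) * (Gamma (y n) * y n ^ a)
            = (Gamma (y n) * y n) * (y n + a) ^ (a - 1) := by
          rw [show (y n) ^ (1-a) * (y n + a) ^ (a-1) * (Gamma (y n) * y n ^ a)
              = (Gamma (y n)) * ((y n) ^ (1-a) * y n ^ a) * (y n + a) ^ (a-1) by ring,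
            ← Real.rpow_add hy0]
          norm_num
        rw [e2]
        calc (Gamma (y n) * y n) * (y n + a) ^ (a - 1)
            ≤ (Gamma (y n + a) * (y n + a) ^ (1 - a)) * (y n + a) ^ (a - 1) := by
              apply mul_le_mul_of_nonneg_right hlb (by positivity)
          _ = Gamma (y n + a) := by
              rw [mul_assoc, ← Real.rpow_add hya]; norm_num
      exact le_div_iff₀ (by positivity) |>.2 key
    · filter_upwards [hy_pos] with n hy0
      have hΓ : 0 < Gamma (y n) := Real.Gamma_pos_of_pos hy0
      exact div_le_one (by positivity) |>.2 (gamma_upper_aux ha ha1 hy0)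
  -- Factor 2: (y n / (n R^p))^a
  have T2 : Tendsto (fun n : ℕ => (y n / ((n : ℝ) * R ^ p)) ^ a) atTop
      (𝓝 ((1 / (p * R ^ p)) ^ a)) := by
    have hbase : Tendsto (fun n : ℕ => y n / ((n : ℝ) * R ^ p)) atTop (𝓝 (1 / (p * R ^ p))) := by
      have h1 : Tendsto (fun n : ℕ => (1 / (n : ℝ) + (1 / p) - (1 / p) * (1 / n)) / R ^ p)
          atTop (𝓝 ((0 + 1 / p - (1 / p) * 0) / R ^ p)) := by
        exact Tendsto.div_const (((tendsto_one_div_atTop_nhds_zero_nat).add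
          tendsto_const_nhds).sub (tendsto_const_nhds.mul tendsto_one_div_atTop_nhds_zero_nat)) _
      simp only [zero_add, mul_zero, sub_zero, div_div] at h1
      refine h1.congr' ?_
      filter_upwards [eventually_ge_atTop 1] with n hn
      have hn0 : (n : ℝ) ≠ 0 := Nat.cast_ne_zero.2 (by omega)
      rw [hy_def]
      field_simp
      ring
    exact hbase.rpow_const (Or.inl (by positivity))
  -- Factor 3: (1 - c/n)^((n-1)/p)
  have T3 : Tendsto (fun n : ℕ => (1 - c / n) ^ (((n : ℝ) - 1) / p)) atTop
      (𝓝 (Real.exp (-c / p))) := by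
    have hL : Tendsto (fun n : ℕ => (((n : ℝ) - 1) / p) * Real.log (1 - c / n)) atTop
        (𝓝 (-c / p)) := by
      have hnl : Tendsto (fun n : ℕ => (n : ℝ) * Real.log (1 - c / n)) atTop (𝓝 (-c)) := by
        have := (Real.tendsto_mul_log_one_add_div_atTop (-c)).comp
          (tendsto_natCast_atTop_atTop (R := ℝ))
        refine this.congr fun n => ?_
        simp [Function.comp, sub_eq_add_neg, neg_div]
      have hfrac : Tendsto (fun n : ℕ => ((n : ℝ) - 1) / n) atTop (𝓝 1) := by
        have : Tendsto (fun n : ℕ => 1 - 1 / (n : ℝ)) atTop (𝓝 (1 - 0)) :=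
          tendsto_const_nhds.sub tendsto_one_div_atTop_nhds_zero_nat
        simp only [sub_zero] at this
        refine this.congr' ?_
        filter_upwards [eventually_ge_atTop 1] with n hn
        have hn0 : (n : ℝ) ≠ 0 := Nat.cast_ne_zero.2 (by omega)
        field_simp
      have hprod : Tendsto (fun n : ℕ =>
          (1 / p) * ((((n : ℝ) - 1) / n) * ((n : ℝ) * Real.log (1 - c / n)))) atTop
          (𝓝 ((1 / p) * (1 * (-c)))) := tendsto_const_nhds.mul (hfrac.mul hnl)
      rw [show (1 / p) * (1 * (-c)) = -c / p by ring] at hprod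
      refine hprod.congr' ?_
      filter_upwards [eventually_ge_atTop 1] with n hn
      have hn0 : (n : ℝ) ≠ 0 := Nat.cast_ne_zero.2 (by omega)
      field_simp
    have := (Real.continuous_exp.tendsto _).comp hL
    refine this.congr' ?_
    filter_upwards [(tendsto_natCast_atTop_atTop (R := ℝ)).eventually_gt_atTop c] with n hn
    have hb : 0 < 1 - c / n := by
      rcases eq_or_lt_of_le hc0 with h | h
      · simp [← h]
      · have hn0 : (0:ℝ) < n := lt_trans h hn
        have : c / n < 1 := (div_lt_one hn0).2 hn
        linarith
    rw [Function.comp_apply, Real.rpow_def_of_pos hb, mul_comm]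
  -- Combine
  have hmain : Tendsto (fun n : ℕ =>
      (p / Gamma (1 / p)) * (Gamma (y n + a) / (Gamma (y n) * y n ^ a)) *
        ((y n / ((n : ℝ) * R ^ p)) ^ a) * ((1 - c / n) ^ (((n : ℝ) - 1) / p))) atTop
      (𝓝 ((p / Gamma (1 / p)) * 1 * (1 / (p * R ^ p)) ^ a * Real.exp (-c / p))) :=
    ((tendsto_const_nhds.mul T1).mul T2).mul T3
  -- identify the limit value
  have hΓp : 0 < Gamma (1 / p) := Real.Gamma_pos_of_pos (by positivity)
  have hval : (p / Gamma (1 / p)) * 1 * (1 / (p * R ^ p)) ^ a * Real.exp (-c / p)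
      = 1 / (R * Gamma (1 / p) * p ^ (1 / p - 1)) * Real.exp (-(x ^ p) / (p * R ^ p)) := by
    have hRpa : (R ^ p) ^ a = R := by
      rw [← Real.rpow_mul hR.le, mul_one_div_cancel hp0.ne', Real.rpow_one]
    have e1 : (1 / (p * R ^ p)) ^ a = 1 / (p ^ a * R) := by
      rw [Real.div_rpow zero_le_one (by positivity), Real.one_rpow,
        Real.mul_rpow hp0.le hRp.le, hRpa]
    have eexp : -c / p = -(x ^ p) / (p * R ^ p) := by
      rw [hc_def]; ring
    have epa : p ^ (1 / p - 1) = p ^ a / p := by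
      rw [ha_def, Real.rpow_sub hp0, Real.rpow_one]
    have hpa : (0:ℝ) < p ^ a := Real.rpow_pos_of_pos hp0 a
    rw [e1, eexp, epa]
    field_simp
  rw [← hval]
  refine hmain.congr' ?_
  filter_upwards [eventually_ge_atTop 1,
    (tendsto_natCast_atTop_atTop (R := ℝ)).eventually_gt_atTop c, hy_pos] with n hn1 hnc hy0
  have hn0 : (0:ℝ) < (n : ℝ) := by exact_mod_cast Nat.pos_of_ne_zero (by omega)
  have hb : 0 < 1 - c / n := by
    have : c / n < 1 := (div_lt_one hn0).2 hnc
    linarith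
  have hnR : 0 < (n : ℝ) * R ^ p := by positivity
  have hΓy : 0 < Gamma (y n) := Real.Gamma_pos_of_pos hy0
  have hya : 0 < y n ^ a := Real.rpow_pos_of_pos hy0 a
  have hG : 0 < ((n : ℝ) * R ^ p) ^ ((n : ℝ) / p) := Real.rpow_pos_of_pos hnR _
  have e0 : (1 : ℝ) + (n : ℝ) / p = y n + a := by
    simp only [hy_def, ha_def]; ring
  have e1 : (n : ℝ) * R ^ p - x ^ p = ((n : ℝ) * R ^ p) * (1 - c / n) := by
    rw [hc_def]; field_simp
  have e2 : (((n : ℝ) * R ^ p) * (1 - c / n)) ^ (((n : ℝ) - 1) / p)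
      = ((n : ℝ) * R ^ p) ^ (((n : ℝ) - 1) / p) * (1 - c / n) ^ (((n : ℝ) - 1) / p) :=
    Real.mul_rpow hnR.le hb.le
  have e3 : ((n : ℝ) * R ^ p) ^ (((n : ℝ) - 1) / p)
      = ((n : ℝ) * R ^ p) ^ (-a) * ((n : ℝ) * R ^ p) ^ ((n : ℝ) / p) := by
    rw [← Real.rpow_add hnR]; congr 1; rw [ha_def]; ring
  have e4 : (y n / ((n : ℝ) * R ^ p)) ^ a = y n ^ a * ((n : ℝ) * R ^ p) ^ (-a) := by
    rw [Real.div_rpow hy0.le hnR.le, Real.rpow_neg hnR.le, div_eq_mul_inv]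
  have alg : ∀ A B C D E G Γp : ℝ, B ≠ 0 → C ≠ 0 → G ≠ 0 → Γp ≠ 0 →
      p / Γp * (A / (B * C)) * (C * D) * E = p * A / (Γp * B) * (D * G * E / G) := by
    intro A B C D E G Γp hB hC hG hΓ
    field_simp
  rw [e0, e1, e2, e3, e4]
  exact alg _ _ _ _ _ _ _ hΓy.ne' hya.ne' hG.ne' hΓp.ne'
end

section
/- Let p \ge 2 be an even integer and R > 0. For each integer n \ge 3, let \rho_n^{(2)}(x,y) = Vol_{n-2}({(x_3,...,x_n) : x^p + y^p + x_3^p + ... + x_n^p \le nR^p}) / Vol_n(M_n) be the joint marginal density of the first two coordinates of the uniform distribution on M_n = {x \in \mathbb{R}^n : \sum x_k^p \le nR^p}. Then for every fixed (x,y) \in \mathbb{R}^2, \rho_n^{(2)}(x,y) converges as n \to \infty to \rho(x)\rho(y), where \rho(x) = (1 / (2 R \Gamma(1/p) p^{1/p - 1})) e^{-x^p/(pR^p)}; i.e., the first two coordinates become independent in the limit, each with density \rho. -/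
open MeasureTheory Real Filter

open Set

lemma vol_lp (p : ℕ) (hp : Even p) (hp2 : 2 ≤ p) (m : ℕ) (hm : 0 < m) (s : ℝ) (hs : 0 ≤ s) :
    (volume {z : Fin m → ℝ | ∑ i, (z i) ^ p ≤ s}).toReal =
      s ^ ((m : ℝ) / p) * (2 * Gamma (1 / p + 1)) ^ m / Gamma (m / p + 1) := by
  haveI : Nonempty (Fin m) := Fin.pos_iff_nonempty.mp hm
  have hp0 : (0:ℝ) < p := by positivity
  have hp1 : (1:ℝ) ≤ (p:ℝ) := by exact_mod_cast (by omega : 1 ≤ p)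
  have hset : {z : Fin m → ℝ | ∑ i, (z i) ^ p ≤ s}
      = {z : Fin m → ℝ | (∑ i, |z i| ^ (p:ℝ)) ^ (1/(p:ℝ)) ≤ s ^ (1/(p:ℝ))} := by
    ext z
    have hsum : ∑ i, (z i) ^ p = ∑ i, |z i| ^ (p:ℝ) := by
      refine Finset.sum_congr rfl fun i _ => ?_
      rw [rpow_natCast, hp.pow_abs]
    have h0 : 0 ≤ ∑ i, |z i| ^ (p:ℝ) := Finset.sum_nonneg fun i _ => rpow_nonneg (abs_nonneg _) _
    simp only [mem_setOf_eq, hsum]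
    rw [← rpow_le_rpow_iff h0 hs (by positivity : (0:ℝ) < 1/(p:ℝ))]
  rw [hset, volume_sum_rpow_le _ hp1 (s ^ (1/(p:ℝ)))]
  have hC : (0:ℝ) < 2 * Gamma (1/p + 1) := by
    have := Real.Gamma_pos_of_pos (by positivity : (0:ℝ) < 1/p + 1); linarith
  have hG : (0:ℝ) < Gamma ((m:ℝ)/p + 1) := Real.Gamma_pos_of_pos (by positivity)
  rw [ENNReal.toReal_mul, ENNReal.toReal_pow, ENNReal.toReal_ofReal (by positivity),
    ENNReal.toReal_ofReal (by positivity)]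
  rw [Fintype.card_fin, ← rpow_natCast (s ^ (1/(p:ℝ))) m, ← rpow_mul hs]
  ring_nf

lemma gautschi (σ : ℝ) (hσ0 : 0 ≤ σ) (hσ1 : σ ≤ 1) (t : ℝ) (ht : 0 < t) :
    (t / (t + σ)) ^ (1 - σ) ≤ Gamma (t + σ) / (Gamma t * t ^ σ) ∧
      Gamma (t + σ) / (Gamma t * t ^ σ) ≤ 1 := by
  have hΓt : 0 < Gamma t := Gamma_pos_of_pos ht
  have hΓts : 0 < Gamma (t + σ) := Gamma_pos_of_pos (by linarith)
  have hcv := Real.convexOn_log_Gamma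
  have h1 : Gamma (t + σ) ≤ Gamma t * t ^ σ := by
    have key := hcv.2 (mem_Ioi.mpr ht) (mem_Ioi.mpr (by linarith : (0:ℝ) < t + 1))
      (by linarith : (0:ℝ) ≤ 1 - σ) hσ0 (by ring)
    simp only [Function.comp_apply, smul_eq_mul] at key
    have harg : (1 - σ) * t + σ * (t + 1) = t + σ := by ring
    rw [harg] at key
    have := exp_le_exp.mpr key
    rw [exp_log hΓts, exp_add,
      show (1 - σ) * log (Gamma t) = log (Gamma t) * (1 - σ) by ring,
      show σ * log (Gamma (t + 1)) = log (Gamma (t + 1)) * σ by ring,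
      ← rpow_def_of_pos hΓt,
      ← rpow_def_of_pos (Gamma_pos_of_pos (by linarith : (0:ℝ) < t + 1))] at this
    calc Gamma (t + σ) ≤ Gamma t ^ (1 - σ) * Gamma (t + 1) ^ σ := this
      _ = Gamma t * t ^ σ := by
          rw [Real.Gamma_add_one ht.ne', mul_rpow ht.le hΓt.le, ← mul_assoc,
            mul_comm (Gamma t ^ (1-σ)) _, mul_assoc, ← rpow_add hΓt]
          ring_nf
          rw [rpow_one]
  have h2 : Gamma t * t ≤ Gamma (t + σ) * (t + σ) ^ (1 - σ) := by
    have key := hcv.2 (mem_Ioi.mpr (by linarith : (0:ℝ) < t + σ))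
      (mem_Ioi.mpr (by linarith : (0:ℝ) < t + 1 + σ)) hσ0 (by linarith : (0:ℝ) ≤ 1 - σ) (by ring)
    simp only [Function.comp_apply, smul_eq_mul] at key
    have harg : σ * (t + σ) + (1 - σ) * (t + 1 + σ) = t + 1 := by ring
    rw [harg] at key
    have := exp_le_exp.mpr key
    have hΓt1s : 0 < Gamma (t + 1 + σ) := Gamma_pos_of_pos (by linarith)
    rw [exp_log (Gamma_pos_of_pos (by linarith : (0:ℝ) < t + 1)), exp_add,
      show σ * log (Gamma (t + σ)) = log (Gamma (t + σ)) * σ by ring,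
      show (1 - σ) * log (Gamma (t + 1 + σ)) = log (Gamma (t + 1 + σ)) * (1 - σ) by ring,
      ← rpow_def_of_pos hΓts, ← rpow_def_of_pos hΓt1s] at this
    have ht1s : Gamma (t + 1 + σ) = Gamma (t + σ) * (t + σ) := by
      rw [show t + 1 + σ = (t + σ) + 1 by ring, Real.Gamma_add_one (by linarith)]
      ring
    calc Gamma t * t = Gamma (t + 1) := (Real.Gamma_add_one ht.ne').symm ▸ by ring
      _ ≤ Gamma (t + σ) ^ σ * Gamma (t + 1 + σ) ^ (1 - σ) := this
      _ = Gamma (t + σ) * (t + σ) ^ (1 - σ) := by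
          rw [ht1s, mul_rpow hΓts.le (by linarith : (0:ℝ) ≤ t + σ), ← mul_assoc,
            ← rpow_add hΓts]
          ring_nf
          rw [rpow_one]
          ring
  constructor
  · rw [div_rpow ht.le (by linarith : (0:ℝ) ≤ t + σ), div_le_div_iff₀ (by positivity)
      (by positivity)]
    calc t ^ (1 - σ) * (Gamma t * t ^ σ) = Gamma t * (t ^ (1 - σ) * t ^ σ) := by ring
      _ = Gamma t * t := by rw [← rpow_add ht]; norm_num
      _ ≤ Gamma (t + σ) * (t + σ) ^ (1 - σ) := h2
  · rw [div_le_one (by positivity)]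
    exact h1

/-- Asymptotic independence of the first two coordinates: the joint marginal density
`ρₙ⁽²⁾(x,y)` of the first two coordinates of the uniform distribution on the `ℓᵖ` ball
`Mₙ = {x ∈ ℝⁿ : ∑ xₖᵖ ≤ nRᵖ}` (`p` even) converges, as `n → ∞`, to `ρ(x)ρ(y)` where
`ρ(x) = e^(-xᵖ/(pRᵖ)) / (2 R Γ(1/p) p^(1/p - 1))`. -/
theorem stmt_10 (p : ℕ) (hp : Even p) (hp2 : 2 ≤ p) (R : ℝ) (hR : 0 < R) (x y : ℝ) :
    Tendsto
      (fun n : ℕ =>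
        (volume {z : Fin (n - 2) → ℝ |
            x ^ p + y ^ p + ∑ i, (z i) ^ p ≤ (n : ℝ) * R ^ p}).toReal /
          (volume {w : Fin n → ℝ | ∑ i, (w i) ^ p ≤ (n : ℝ) * R ^ p}).toReal)
      atTop
      (nhds
        ((1 / (2 * R * Gamma (1 / (p : ℝ)) * (p : ℝ) ^ ((1 : ℝ) / p - 1)) *
            Real.exp (-(x ^ p) / (p * R ^ p))) *
          (1 / (2 * R * Gamma (1 / (p : ℝ)) * (p : ℝ) ^ ((1 : ℝ) / p - 1)) *
            Real.exp (-(y ^ p) / (p * R ^ p))))) := by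
  have hp0 : (0:ℝ) < p := by exact_mod_cast (by omega : 0 < p)
  set Rp : ℝ := R ^ p with hRpdef
  have hRp : 0 < Rp := by positivity
  set s : ℝ := x ^ p + y ^ p with hsdef
  have hs0 : 0 ≤ s := add_nonneg (hp.pow_nonneg x) (hp.pow_nonneg y)
  set σ : ℝ := 2 / p with hσdef
  have hσ0 : 0 < σ := by positivity
  have hσ1 : σ ≤ 1 := by rw [hσdef, div_le_one hp0]; exact_mod_cast hp2
  set C : ℝ := 2 * Gamma (1 / p + 1) with hCdef
  have hC : 0 < C := by
    have := Real.Gamma_pos_of_pos (show (0:ℝ) < 1 / p + 1 by positivity)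
    rw [hCdef]; linarith
  set c : ℝ := -s / Rp with hcdef
  set τ : ℕ → ℝ := fun n => ((n:ℝ) - 2) / p + 1 with hτdef
  have hτpos : ∀ n : ℕ, 3 ≤ n → 0 < τ n := by
    intro n hn
    have h3 : (3:ℝ) ≤ (n:ℝ) := by exact_mod_cast hn
    have h4 : (0:ℝ) ≤ ((n:ℝ) - 2) / p := div_nonneg (by linarith) hp0.le
    simp only [hτdef]; linarith
  set g : ℕ → ℝ := fun n =>
    exp (log (1 + c / n) * (((n:ℝ) - 2) / p)) *
      (Gamma ((n:ℝ) / p + 1) / (Gamma (τ n) * τ n ^ σ)) *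
      ((τ n / ((n:ℝ) * Rp)) ^ σ) * (C ^ 2)⁻¹ with hgdef
  have hG : 0 < Gamma (1 / (p:ℝ)) := Gamma_pos_of_pos (by positivity)
  set q : ℝ := (p:ℝ) ^ ((1:ℝ)/p) with hqdef
  have hq : 0 < q := rpow_pos_of_pos hp0 _
  -- the limit value
  have hLeq : exp (c * (1 / p)) * 1 * ((1 / ((p:ℝ) * Rp)) ^ σ) * (C ^ 2)⁻¹
      = (1 / (2 * R * Gamma (1 / (p : ℝ)) * (p : ℝ) ^ ((1 : ℝ) / p - 1)) *
            Real.exp (-(x ^ p) / ((p:ℝ) * Rp))) *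
          (1 / (2 * R * Gamma (1 / (p : ℝ)) * (p : ℝ) ^ ((1 : ℝ) / p - 1)) *
            Real.exp (-(y ^ p) / ((p:ℝ) * Rp))) := by
    have hexp : exp (c * (1/(p:ℝ))) = exp (-(x^p) / ((p:ℝ) * Rp)) * exp (-(y^p) / ((p:ℝ) * Rp)) := by
      rw [← exp_add]; congr 1; rw [hcdef, hsdef]; field_simp; ring
    have hppow : (p : ℝ) ^ ((1:ℝ)/p - 1) = q / p := by
      rw [rpow_sub hp0, rpow_one, hqdef]
    have hpRp : ((p:ℝ) * Rp) ^ ((1:ℝ)/p) = q * R := by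
      rw [mul_rpow hp0.le hRp.le, hqdef, hRpdef, ← rpow_natCast R p, ← rpow_mul hR.le,
        mul_one_div, div_self (ne_of_gt hp0), rpow_one]
    have h2 : ((p:ℝ) * Rp) ^ σ = (q * R) ^ 2 := by
      rw [← hpRp, ← rpow_natCast (((p:ℝ) * Rp) ^ ((1:ℝ)/p)) 2, ← rpow_mul (by positivity)]
      congr 1
      rw [hσdef]; push_cast; ring
    have hTT : (1 / ((p:ℝ) * Rp)) ^ σ = ((q * R) ^ 2)⁻¹ := by
      rw [one_div, inv_rpow (by positivity), h2]
    rw [hexp, hTT, hppow, hCdef, Real.Gamma_add_one (one_div_ne_zero (ne_of_gt hp0))]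
    set Ea := exp (-(x ^ p) / ((p:ℝ) * Rp)) with hEa0
    set Eb := exp (-(y ^ p) / ((p:ℝ) * Rp)) with hEb0
    set G := Gamma (1 / (p:ℝ)) with hG0
    field_simp
  -- eventual equality of the density ratio with `g`
  have heq : g =ᶠ[atTop] (fun n : ℕ =>
      (volume {z : Fin (n - 2) → ℝ | s + ∑ i, (z i) ^ p ≤ (n : ℝ) * Rp}).toReal /
        (volume {w : Fin n → ℝ | ∑ i, (w i) ^ p ≤ (n : ℝ) * Rp}).toReal) := by
    rw [EventuallyEq, eventually_atTop]
    refine ⟨max 3 (⌈s / Rp⌉₊ + 1), fun n hn => ?_⟩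
    have hn3 : 3 ≤ n := le_trans (le_max_left _ _) hn
    have hns : s < (n:ℝ) * Rp := by
      have h2 : ((⌈s / Rp⌉₊ : ℝ) + 1) ≤ (n:ℝ) := by
        exact_mod_cast le_trans (le_max_right 3 _) hn
      have h1 := Nat.le_ceil (s / Rp)
      have h3 : s / Rp < (n:ℝ) := by linarith
      exact (div_lt_iff₀ hRp).mp h3
    have hnpos : (0:ℝ) < (n:ℝ) := by exact_mod_cast (by omega : 0 < n)
    have hnR : (0:ℝ) < (n:ℝ) * Rp := by positivity
    have hcast : ((n - 2 : ℕ) : ℝ) = (n:ℝ) - 2 := by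
      rw [Nat.cast_sub (by omega)]; norm_num
    have hsetnum : {z : Fin (n - 2) → ℝ | s + ∑ i, (z i) ^ p ≤ (n : ℝ) * Rp}
        = {z : Fin (n - 2) → ℝ | ∑ i, (z i) ^ p ≤ (n : ℝ) * Rp - s} := by
      ext z; simp only [Set.mem_setOf_eq]; constructor <;> intro h <;> linarith
    have hnum := vol_lp p hp hp2 (n - 2) (by omega) ((n:ℝ) * Rp - s) (by linarith)
    have hden := vol_lp p hp hp2 n (by omega) ((n:ℝ) * Rp) hnR.le
    rw [← hCdef] at hnum hden
    rw [hcast] at hnum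
    simp only [hgdef]
    rw [hsetnum, hnum, hden]
    have h1c : 1 + c / (n:ℝ) = ((n:ℝ) * Rp - s) / ((n:ℝ) * Rp) := by
      rw [hcdef]; field_simp; ring
    have h1cpos : 0 < 1 + c / (n:ℝ) := by
      rw [h1c]; exact div_pos (by linarith) hnR
    have ha : ((n:ℝ) * Rp - s) ^ (((n:ℝ) - 2) / p)
        = exp (log (1 + c / (n:ℝ)) * (((n:ℝ) - 2) / p)) * ((n:ℝ) * Rp) ^ (((n:ℝ) - 2) / p) := by
      rw [← rpow_def_of_pos h1cpos, ← mul_rpow h1cpos.le hnR.le, h1c,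
        div_mul_cancel₀ _ hnR.ne']
    have hb : ((n:ℝ) * Rp) ^ ((n:ℝ) / p)
        = ((n:ℝ) * Rp) ^ (((n:ℝ) - 2) / p) * ((n:ℝ) * Rp) ^ σ := by
      rw [← rpow_add hnR, hσdef]; congr 1; ring
    have hc2 : C ^ n = C ^ (n - 2) * C ^ 2 := by rw [← pow_add]; congr 1; omega
    have hτn3 : 0 < ((n:ℝ) - 2) / p + 1 := by
      have := hτpos n hn3; simpa [hτdef] using this
    have hτσ : ((((n:ℝ) - 2) / p + 1) / ((n:ℝ) * Rp)) ^ σ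
        = (((n:ℝ) - 2) / p + 1) ^ σ / ((n:ℝ) * Rp) ^ σ :=
      div_rpow hτn3.le hnR.le σ
    have hG1 : 0 < Gamma (((n:ℝ) - 2) / p + 1) := Gamma_pos_of_pos hτn3
    have hG2 : 0 < Gamma ((n:ℝ) / p + 1) := Gamma_pos_of_pos (by positivity)
    have hXe : 0 < ((n:ℝ) * Rp) ^ (((n:ℝ) - 2) / p) := rpow_pos_of_pos hnR _
    have hNσ : 0 < ((n:ℝ) * Rp) ^ σ := rpow_pos_of_pos hnR _
    have hτσpos : 0 < (((n:ℝ) - 2) / p + 1) ^ σ := rpow_pos_of_pos hτn3 _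
    have hApos : 0 < exp (log (1 + c / (n:ℝ)) * (((n:ℝ) - 2) / p)) := exp_pos _
    have hCm : 0 < C ^ (n - 2) := pow_pos hC _
    simp only [hτdef]
    rw [ha, hb, hc2, hτσ]
    set A := exp (log (1 + c / (n:ℝ)) * (((n:ℝ) - 2) / p)) with hA0
    set X := ((n:ℝ) * Rp) ^ (((n:ℝ) - 2) / p) with hX0
    set Nσ := ((n:ℝ) * Rp) ^ σ with hN0
    set G1 := Gamma (((n:ℝ) - 2) / p + 1) with hG10
    set G2 := Gamma ((n:ℝ) / p + 1) with hG20
    set T := (((n:ℝ) - 2) / p + 1) ^ σ with hT0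
    set Cm := C ^ (n - 2) with hCm0
    field_simp
  -- the limit of `g`
  have hA : Tendsto (fun n : ℕ => exp (log (1 + c / (n:ℝ)) * (((n:ℝ) - 2) / p))) atTop
      (nhds (exp (c * (1 / p)))) := by
    have h1 : Tendsto (fun n : ℕ => (n:ℝ) * log (1 + c / (n:ℝ))) atTop (nhds c) :=
      (Real.tendsto_mul_log_one_add_div_atTop c).comp tendsto_natCast_atTop_atTop
    have h2 : Tendsto (fun n : ℕ => (1 - 2 / (n:ℝ)) * (1 / (p:ℝ))) atTop
        (nhds ((1 - 0) * (1 / (p:ℝ)))) :=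
      ((tendsto_const_nhds.sub (tendsto_const_div_atTop_nhds_zero_nat 2))).mul tendsto_const_nhds
    have h3 := h1.mul h2
    have h4 : Tendsto (fun n : ℕ => log (1 + c / (n:ℝ)) * (((n:ℝ) - 2) / p)) atTop
        (nhds (c * ((1 - 0) * (1 / (p:ℝ))))) := by
      refine h3.congr' ?_
      filter_upwards [eventually_ge_atTop 1] with n hn
      have hn0 : (n:ℝ) ≠ 0 := by positivity
      field_simp
    have h5 : c * ((1 - 0) * (1 / (p:ℝ))) = c * (1 / p) := by ring
    rw [h5] at h4
    exact (Real.continuous_exp.tendsto _).comp h4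
  have hτtop : Tendsto τ atTop atTop := by
    have h1 : Tendsto (fun n : ℕ => (n:ℝ) + (-2)) atTop atTop :=
      tendsto_atTop_add_const_right _ _ tendsto_natCast_atTop_atTop
    have h2 := (h1.atTop_div_const hp0)
    have h3 := tendsto_atTop_add_const_right atTop 1 h2
    refine h3.congr fun n => ?_
    simp only [hτdef]; ring
  have hQ : Tendsto (fun n : ℕ => Gamma ((n:ℝ) / p + 1) / (Gamma (τ n) * τ n ^ σ)) atTop
      (nhds 1) := by
    have hfrac : Tendsto (fun n : ℕ => τ n / (τ n + σ)) atTop (nhds 1) := by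
      have h0 : Tendsto (fun n : ℕ => σ / (τ n + σ)) atTop (nhds 0) :=
        Tendsto.div_atTop tendsto_const_nhds (tendsto_atTop_add_const_right _ _ hτtop)
      have h1 := (tendsto_const_nhds (x := (1:ℝ)) (f := atTop)).sub h0
      rw [sub_zero] at h1
      refine h1.congr' ?_
      filter_upwards [eventually_ge_atTop 3] with n hn
      have hτn := hτpos n hn
      field_simp; ring
    have hl : Tendsto (fun n : ℕ => (τ n / (τ n + σ)) ^ (1 - σ)) atTop (nhds 1) := by
      have hcont := (Real.continuousAt_rpow_const 1 (1 - σ) (Or.inl one_ne_zero)).tendsto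
      have := hcont.comp hfrac
      simp only [Function.comp_def, one_rpow] at this
      exact this
    refine tendsto_of_tendsto_of_tendsto_of_le_of_le' hl tendsto_const_nhds ?_ ?_
    · filter_upwards [eventually_ge_atTop 3] with n hn
      have hga := (gautschi σ hσ0.le hσ1 (τ n) (hτpos n hn)).1
      have harg : τ n + σ = (n:ℝ) / p + 1 := by
        rw [hτdef, hσdef]; field_simp; ring
      rwa [show Gamma (τ n + σ) = Gamma ((n:ℝ) / p + 1) from by rw [harg]] at hga
    · filter_upwards [eventually_ge_atTop 3] with n hn
      have hga := (gautschi σ hσ0.le hσ1 (τ n) (hτpos n hn)).2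
      have harg : τ n + σ = (n:ℝ) / p + 1 := by
        rw [hτdef, hσdef]; field_simp; ring
      rwa [show Gamma (τ n + σ) = Gamma ((n:ℝ) / p + 1) from by rw [harg]] at hga
  have hT : Tendsto (fun n : ℕ => (τ n / ((n:ℝ) * Rp)) ^ σ) atTop
      (nhds ((1 / ((p:ℝ) * Rp)) ^ σ)) := by
    have hinner : Tendsto (fun n : ℕ => τ n / ((n:ℝ) * Rp)) atTop (nhds (1 / ((p:ℝ) * Rp))) := by
      have h1 : Tendsto (fun n : ℕ => ((1 - 2 / (n:ℝ)) / p + 1 / (n:ℝ)) / Rp) atTop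
          (nhds (((1 - 0) / p + 0) / Rp)) :=
        (((tendsto_const_nhds.sub (tendsto_const_div_atTop_nhds_zero_nat 2)).div_const _).add
          (tendsto_const_div_atTop_nhds_zero_nat 1)).div_const _
      have h2 : ((1 - 0) / (p:ℝ) + 0) / Rp = 1 / ((p:ℝ) * Rp) := by field_simp; ring
      rw [h2] at h1
      refine h1.congr' ?_
      filter_upwards [eventually_ge_atTop 1] with n hn
      have hn0 : (n:ℝ) ≠ 0 := by positivity
      rw [hτdef]
      field_simp
    have hcont := (Real.continuousAt_rpow_const (1 / ((p:ℝ) * Rp)) σ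
      (Or.inl (by positivity))).tendsto
    have := hcont.comp hinner
    simpa only [Function.comp_def] using this
  have hg : Tendsto g atTop
      (nhds (exp (c * (1 / p)) * 1 * ((1 / ((p:ℝ) * Rp)) ^ σ) * (C ^ 2)⁻¹)) :=
    ((hA.mul hQ).mul hT).mul tendsto_const_nhds
  rw [hLeq] at hg
  exact Tendsto.congr' heq hg
end
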